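/- For the biochemical oxygen demand model B(t) = θ₀(1 - exp(-θ₁ t)), the map (θ₀, θ₁) ↦ B(t) is injective on (0,∞) × (0,∞) when evaluated at two distinct positive times t₁ ≠ t₂: if θ₀(1-e^{-θ₁ t}) = θ₀'(1-e^{-θ₁' t}) for t ∈ {t₁, t₂} with t₁, t₂ > 0 distinct, then (θ₀,θ₁) = (θ₀',θ₁'). -/

import Mathlib

open Real

lemma stmt17_aux (θ₀ θ₁ θ₀' θ₁' t₁ t₂ : ℝ)
    (hθ₀ : 0 < θ₀) (hθ₁ : 0 < θ₁) (hθ₀' : 0 < θ₀') (hθ₁' : 0 < θ₁')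
    (ht₁ : 0 < t₁) (hlt : t₁ < t₂)
    (h1 : θ₀ * (1 - Real.exp (-θ₁ * t₁)) = θ₀' * (1 - Real.exp (-θ₁' * t₁)))
    (h2 : θ₀ * (1 - Real.exp (-θ₁ * t₂)) = θ₀' * (1 - Real.exp (-θ₁' * t₂))) :
    θ₀ = θ₀' ∧ θ₁ = θ₁' := by
  set f : ℝ → ℝ := fun t => θ₀ * (1 - Real.exp (-θ₁ * t)) - θ₀' * (1 - Real.exp (-θ₁' * t)) with hf
  have hderiv : ∀ t : ℝ, HasDerivAt f
      (θ₀ * (θ₁ * Real.exp (-θ₁ * t)) - θ₀' * (θ₁' * Real.exp (-θ₁' * t))) t := by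
    intro t
    have e1 : HasDerivAt (fun t : ℝ => Real.exp (-θ₁ * t)) (-θ₁ * Real.exp (-θ₁ * t)) t := by
      simpa [mul_comm] using ((hasDerivAt_id t).const_mul (-θ₁)).exp
    have e2 : HasDerivAt (fun t : ℝ => Real.exp (-θ₁' * t)) (-θ₁' * Real.exp (-θ₁' * t)) t := by
      simpa [mul_comm] using ((hasDerivAt_id t).const_mul (-θ₁')).exp
    have d1 := (((hasDerivAt_const t (1:ℝ)).sub e1).const_mul θ₀).sub
      (((hasDerivAt_const t (1:ℝ)).sub e2).const_mul θ₀')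
    refine d1.congr_deriv ?_
    ring
  have hc : Continuous f := by
    apply Continuous.sub <;> exact (continuous_const.mul (continuous_const.sub
      (Real.continuous_exp.comp (continuous_const.mul continuous_id))))
  have hf0 : f 0 = 0 := by simp [hf]
  have hft₁ : f t₁ = 0 := by simp only [hf]; linarith
  have hft₂ : f t₂ = 0 := by simp only [hf]; linarith
  obtain ⟨s₁, hs₁, hds₁⟩ := exists_deriv_eq_zero ht₁ hc.continuousOn (hf0.trans hft₁.symm)
  obtain ⟨s₂, hs₂, hds₂⟩ := exists_deriv_eq_zero hlt hc.continuousOn (hft₁.trans hft₂.symm)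
  rw [(hderiv s₁).deriv] at hds₁
  rw [(hderiv s₂).deriv] at hds₂
  have key : ∀ s : ℝ, θ₀ * (θ₁ * Real.exp (-θ₁ * s)) - θ₀' * (θ₁' * Real.exp (-θ₁' * s)) = 0 →
      Real.log (θ₀ * θ₁) - θ₁ * s = Real.log (θ₀' * θ₁') - θ₁' * s := by
    intro s hs
    have h : θ₀ * θ₁ * Real.exp (-θ₁ * s) = θ₀' * θ₁' * Real.exp (-θ₁' * s) := by linarith
    have := congrArg Real.log h
    rw [Real.log_mul (by positivity) (Real.exp_ne_zero _),
        Real.log_mul (by positivity) (Real.exp_ne_zero _),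
        Real.log_exp, Real.log_exp] at this
    linarith
  have k1 := key s₁ hds₁
  have k2 := key s₂ hds₂
  have hslt : s₁ < s₂ := hs₁.2.trans hs₂.1
  have hθeq : θ₁ = θ₁' := by
    have : θ₁ * (s₂ - s₁) = θ₁' * (s₂ - s₁) := by linarith
    have h' := mul_right_cancel₀ (by linarith : s₂ - s₁ ≠ 0) this
    exact h'
  rw [hθeq] at k1
  have hlog : Real.log (θ₀ * θ₁') = Real.log (θ₀' * θ₁') := by linarith
  have : θ₀ * θ₁' = θ₀' * θ₁' :=
    Real.log_injOn_pos (Set.mem_Ioi.mpr (by positivity)) (Set.mem_Ioi.mpr (by positivity)) hlog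
  exact ⟨mul_right_cancel₀ (ne_of_gt hθ₁') this, hθeq⟩

/-- Identifiability of the biochemical oxygen demand model
`B(t; θ₀, θ₁) = θ₀(1 - exp(-θ₁ t))` from two distinct positive time points:
if the curves agree at `t₁ ≠ t₂` (both positive) then the parameters agree. -/
theorem stmt17 (θ₀ θ₁ θ₀' θ₁' t₁ t₂ : ℝ)
    (hθ₀ : 0 < θ₀) (hθ₁ : 0 < θ₁) (hθ₀' : 0 < θ₀') (hθ₁' : 0 < θ₁')
    (ht₁ : 0 < t₁) (ht₂ : 0 < t₂) (hne : t₁ ≠ t₂)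
    (h1 : θ₀ * (1 - Real.exp (-θ₁ * t₁)) = θ₀' * (1 - Real.exp (-θ₁' * t₁)))
    (h2 : θ₀ * (1 - Real.exp (-θ₁ * t₂)) = θ₀' * (1 - Real.exp (-θ₁' * t₂))) :
    θ₀ = θ₀' ∧ θ₁ = θ₁' := by
  rcases lt_or_gt_of_ne hne with h | h
  · exact stmt17_aux θ₀ θ₁ θ₀' θ₁' t₁ t₂ hθ₀ hθ₁ hθ₀' hθ₁' ht₁ h h1 h2
  · exact stmt17_aux θ₀ θ₁ θ₀' θ₁' t₂ t₁ hθ₀ hθ₁ hθ₀' hθ₁' ht₂ h h2 h1
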